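/- Let (U,C) be a 3-SAT instance with n_u variables and n_c clauses. Let H be the undirected graph consisting of the graph G_{U,C} together with two additional adjacent vertices v_t and v_q, where v_t is also adjacent to every clause vertex v^c_j. Let dist(i,j) be the shortest-path distance (number of edges) between vertices i and j in H, and let every vertex have acceptability threshold 1 except v_q, which has threshold 2; let D be the digraph on the vertices of H with an arc (i,j) for i ≠ j iff dist(i,j) ≤ θ_i. Then D has a kernel containing v_q if and only if (U,C) is satisfiable. -/

import Mathlib

namespace LD

/-- `K` is a kernel of the digraph with vertex set `S` and arc relation `A`:
independent and absorbing. -/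
def Kernel {V : Type*} (S : Set V) (A : V → V → Prop) (K : Set V) : Prop :=
  K ⊆ S ∧ (∀ i ∈ K, ∀ j ∈ K, ¬ A i j) ∧ ∀ u ∈ S, u ∉ K → ∃ k ∈ K, A u k

/-- Vertices of the graph `H`: variable vertices `(x, b)` (the literal `x` if
`b = true`, `¬x` if `b = false`), clause vertices `Fin nc`, plus the two extra
vertices `v_t` (encoded `true`) and `v_q` (encoded `false`). -/
abbrev MembVtx (U : Type*) (nc : ℕ) := (U × Bool) ⊕ (Fin nc ⊕ Bool)

/-- The extra vertex `v_t`. -/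
def vt {U : Type*} {nc : ℕ} : MembVtx U nc := Sum.inr (Sum.inr true)

/-- The extra vertex `v_q`. -/
def vq {U : Type*} {nc : ℕ} : MembVtx U nc := Sum.inr (Sum.inr false)

/-- Base relation generating the edges of `H`: the gadget graph `G_{U,C}`
(variable pairs adjacent; each clause vertex adjacent to the variable vertices
of its three literals), plus `v_t` adjacent to every clause vertex and to
`v_q`. -/
def membRel {U : Type*} {nc : ℕ} (Cl : Fin nc → Fin 3 → U × Bool) :
    MembVtx U nc → MembVtx U nc → Prop
  | Sum.inl (x, b), Sum.inl (y, c) => x = y ∧ b ≠ c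
  | Sum.inr (Sum.inl j), Sum.inl (x, b) => ∃ m : Fin 3, Cl j m = (x, b)
  | Sum.inr (Sum.inr t), Sum.inr (Sum.inl _) => t = true
  | Sum.inr (Sum.inr t), Sum.inr (Sum.inr s) => t = true ∧ s = false
  | _, _ => False

/-- The undirected graph `H` of the reduction. -/
def membGraph {U : Type*} {nc : ℕ} (Cl : Fin nc → Fin 3 → U × Bool) :
    SimpleGraph (MembVtx U nc) :=
  SimpleGraph.fromRel (membRel Cl)

/-- Acceptability thresholds: `2` for `v_q` and `1` for every other vertex. -/
def membThreshold {U : Type*} [DecidableEq U] {nc : ℕ} (v : MembVtx U nc) : ℕ∞ :=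
  if v = vq then 2 else 1

/-- The digraph `D` of the reduction: an arc `(i,j)` for `i ≠ j` iff the
shortest-path distance between `i` and `j` in `H` is at most `θ i` (vertices in
different connected components are at infinite distance). -/
def membArc {U : Type*} [DecidableEq U] {nc : ℕ} (Cl : Fin nc → Fin 3 → U × Bool)
    (i j : MembVtx U nc) : Prop :=
  i ≠ j ∧ (membGraph Cl).edist i j ≤ membThreshold i

/-- The 3-SAT instance `Cl` is satisfiable: some truth assignment makes at least
one literal of every clause true. -/
def Satisfiable {U : Type*} {nc : ℕ} (Cl : Fin nc → Fin 3 → U × Bool) : Prop :=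
  ∃ σ : U → Bool, ∀ j : Fin nc, ∃ m : Fin 3, σ (Cl j m).1 = (Cl j m).2

end LD

section Helpers

open SimpleGraph LD

lemma edist_le_one_iff {V : Type*} {G : SimpleGraph V} {u v : V} :
    G.edist u v ≤ 1 ↔ u = v ∨ G.Adj u v := by
  constructor
  · intro h
    have hne : G.edist u v ≠ ⊤ := fun ht => by simp [ht] at h
    obtain ⟨p, hp⟩ := exists_walk_of_edist_ne_top hne
    rw [← hp] at h
    have hl : p.length ≤ 1 := by exact_mod_cast h
    cases p with
    | nil => exact Or.inl rfl
    | cons hadj q =>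
      have : q.length = 0 := by simp only [SimpleGraph.Walk.length_cons] at hl; omega
      exact Or.inr ((SimpleGraph.Walk.eq_of_length_eq_zero this) ▸ hadj)
  · rintro (rfl | h)
    · simp
    · calc G.edist u v ≤ h.toWalk.length := edist_le _
        _ ≤ 1 := by simp
lemma edist_le_two_iff {V : Type*} {G : SimpleGraph V} {u v : V} :
    G.edist u v ≤ 2 ↔ u = v ∨ G.Adj u v ∨ ∃ w, G.Adj u w ∧ G.Adj w v := by
  constructor
  · intro h
    have hne : G.edist u v ≠ ⊤ := fun ht => by simp [ht] at h
    obtain ⟨p, hp⟩ := exists_walk_of_edist_ne_top hne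
    rw [← hp] at h
    have hl : p.length ≤ 2 := by exact_mod_cast h
    cases p with
    | nil => exact Or.inl rfl
    | cons hadj q =>
      cases q with
      | nil => exact Or.inr (Or.inl hadj)
      | cons hadj2 r =>
        have : r.length = 0 := by simp only [SimpleGraph.Walk.length_cons] at hl; omega
        exact Or.inr (Or.inr ⟨_, hadj, (SimpleGraph.Walk.eq_of_length_eq_zero this) ▸ hadj2⟩)
  · rintro (rfl | h | ⟨w, h1, h2⟩)
    · simp
    · calc G.edist u v ≤ h.toWalk.length := edist_le _
        _ ≤ 2 := by simp
    · calc G.edist u v ≤ (SimpleGraph.Walk.cons h1 h2.toWalk).length := edist_le _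
        _ ≤ 2 := by simp

variable {U : Type*} [DecidableEq U] {nc : ℕ} (Cl : Fin nc → Fin 3 → U × Bool)

lemma adj_vq {w : MembVtx U nc} : (membGraph Cl).Adj vq w ↔ w = vt := by
  rcases w with ⟨x, b⟩ | (j | t) <;>
    simp [membGraph, SimpleGraph.fromRel_adj, membRel, vq, vt]
lemma adj_vt {w : MembVtx U nc} :
    (membGraph Cl).Adj vt w ↔ (∃ j, w = Sum.inr (Sum.inl j)) ∨ w = vq := by
  rcases w with ⟨x, b⟩ | (j | t) <;>
    simp [membGraph, SimpleGraph.fromRel_adj, membRel, vq, vt]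

lemma adj_varvar {x y : U} {b c : Bool} :
    (membGraph Cl).Adj (Sum.inl (x, b)) (Sum.inl (y, c)) ↔ x = y ∧ b ≠ c := by
  simp only [membGraph, SimpleGraph.fromRel_adj, membRel]
  constructor
  · rintro ⟨-, ⟨rfl, h⟩ | ⟨rfl, h⟩⟩
    · exact ⟨rfl, h⟩
    · exact ⟨rfl, Ne.symm h⟩
  · rintro ⟨rfl, h⟩
    exact ⟨by simpa using h, Or.inl ⟨rfl, h⟩⟩

lemma adj_varclause {p : U × Bool} {j : Fin nc} :
    (membGraph Cl).Adj (Sum.inl p) (Sum.inr (Sum.inl j)) ↔ ∃ m, Cl j m = p := by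
  obtain ⟨x, b⟩ := p
  simp [membGraph, SimpleGraph.fromRel_adj, membRel]

lemma not_adj_var_extra {p : U × Bool} {t : Bool} :
    ¬ (membGraph Cl).Adj (Sum.inl p) (Sum.inr (Sum.inr t)) := by
  obtain ⟨x, b⟩ := p
  simp [membGraph, SimpleGraph.fromRel_adj, membRel]

lemma membThreshold_vq : membThreshold (vq : MembVtx U nc) = 2 := if_pos rfl

lemma membArc_other_iff {i j : MembVtx U nc} (h : i ≠ vq) :
    membArc Cl i j ↔ (membGraph Cl).Adj i j := by
  unfold membArc
  rw [membThreshold, if_neg h]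
  constructor
  · rintro ⟨hne, hle⟩
    rcases edist_le_one_iff.mp hle with rfl | hadj
    · exact absurd rfl hne
    · exact hadj
  · intro hadj
    exact ⟨hadj.ne, edist_le_one_iff.mpr (Or.inr hadj)⟩

lemma membArc_vq_iff {w : MembVtx U nc} :
    membArc Cl vq w ↔ w = vt ∨ ∃ j, w = Sum.inr (Sum.inl j) := by
  unfold membArc
  rw [membThreshold_vq]
  constructor
  · rintro ⟨hne, hle⟩
    rcases edist_le_two_iff.mp hle with rfl | hadj | ⟨z, h1, h2⟩
    · exact absurd rfl hne
    · exact Or.inl ((adj_vq Cl).mp hadj)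
    · have hz : z = vt := (adj_vq Cl).mp h1
      subst hz
      rcases (adj_vt Cl).mp h2 with ⟨j, rfl⟩ | rfl
      · exact Or.inr ⟨j, rfl⟩
      · exact absurd rfl hne
  · rintro (rfl | ⟨j, rfl⟩)
    · refine ⟨by simp [vq, vt], ?_⟩
      exact edist_le_two_iff.mpr (Or.inr (Or.inl ((adj_vq Cl).mpr rfl)))
    · refine ⟨by simp [vq], ?_⟩
      exact edist_le_two_iff.mpr (Or.inr (Or.inr
        ⟨vt, (adj_vq Cl).mpr rfl, (adj_vt Cl).mpr (Or.inl ⟨j, rfl⟩)⟩))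

end Helpers


open LD in
/-- the MEMB reduction for distance-based profiles.
For a 3-SAT instance `(U, C)`, the digraph `D` built from the shortest-path
distances of the graph `H` (the gadget graph `G_{U,C}` plus the two adjacent
vertices `v_t, v_q`, with `v_t` adjacent to all clause vertices) and the
thresholds `θ(v_q) = 2`, `θ(v) = 1` otherwise, has a kernel containing `v_q`
iff `(U, C)` is satisfiable. -/
theorem memb_reduction_kernel_iff_satisfiable {U : Type*} [Fintype U]
    [DecidableEq U] {nc : ℕ} (Cl : Fin nc → Fin 3 → U × Bool) :
    (∃ K : Set (MembVtx U nc), Kernel Set.univ (membArc Cl) K ∧ vq ∈ K) ↔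
      Satisfiable Cl := by
  classical
  constructor
  · rintro ⟨K, ⟨-, hind, habs⟩, hvqK⟩
    have hvt : (vt : MembVtx U nc) ∉ K := fun h =>
      hind _ hvqK _ h ((membArc_vq_iff Cl).mpr (Or.inl rfl))
    have hcl : ∀ j : Fin nc, (Sum.inr (Sum.inl j) : MembVtx U nc) ∉ K := fun j h =>
      hind _ hvqK _ h ((membArc_vq_iff Cl).mpr (Or.inr ⟨j, rfl⟩))
    have hvar : ∀ x : U, (Sum.inl (x, true) : MembVtx U nc) ∈ K ∨
        (Sum.inl (x, false) : MembVtx U nc) ∈ K := by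
      intro x
      by_contra hc
      push_neg at hc
      obtain ⟨k, hk, hark⟩ := habs (Sum.inl (x, true)) trivial hc.1
      have hadj := (membArc_other_iff Cl (by simp [vq])).mp hark
      rcases k with ⟨y, c⟩ | (j | t)
      · obtain ⟨rfl, hbc⟩ := (adj_varvar Cl).mp hadj
        have : c = false := by simpa using hbc.symm
        subst this; exact hc.2 hk
      · exact hcl j hk
      · exact not_adj_var_extra Cl hadj
    set σ : U → Bool := fun x => if (Sum.inl (x, true) : MembVtx U nc) ∈ K then true else false
      with hσ
    have hσK : ∀ x : U, (Sum.inl (x, σ x) : MembVtx U nc) ∈ K := by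
      intro x
      by_cases h : (Sum.inl (x, true) : MembVtx U nc) ∈ K
      · simpa [hσ, h] using h
      · rcases hvar x with h' | h'
        · exact absurd h' h
        · simpa [hσ, h] using h'
    refine ⟨σ, fun j => ?_⟩
    obtain ⟨k, hk, hark⟩ := habs (Sum.inr (Sum.inl j)) trivial (hcl j)
    have hadj := (membArc_other_iff Cl (by simp [vq])).mp hark
    rcases k with ⟨x, b⟩ | (j' | t)
    · obtain ⟨m, hm⟩ := (adj_varclause Cl).mp hadj.symm
      refine ⟨m, ?_⟩
      rw [hm]
      -- need σ x = b, given Sum.inl (x, b) ∈ K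
      have hone : ¬ ((Sum.inl (x, true) : MembVtx U nc) ∈ K ∧
          (Sum.inl (x, false) : MembVtx U nc) ∈ K) := by
        rintro ⟨h1, h2⟩
        exact hind _ h1 _ h2 ((membArc_other_iff Cl (by simp [vq])).mpr
          ((adj_varvar Cl).mpr ⟨rfl, by simp⟩))
      cases b with
      | true => simp only [hσ]; simp [hk]
      | false =>
        have : (Sum.inl (x, true) : MembVtx U nc) ∉ K := fun h => hone ⟨h, hk⟩
        simp only [hσ]; simp [this]
    · exact absurd hk (hcl j')
    · cases t with
      | true => exact absurd hk hvt
      | false =>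
        have := (adj_vq Cl).mp hadj.symm
        simp [vt] at this
  · rintro ⟨σ, hsat⟩
    refine ⟨insert vq (Set.range fun x : U => (Sum.inl (x, σ x) : MembVtx U nc)),
      ⟨Set.subset_univ _, ?_, ?_⟩, Set.mem_insert _ _⟩
    · rintro i (rfl | ⟨x, rfl⟩) j (rfl | ⟨y, rfl⟩) harc
      · exact harc.1 rfl
      · rcases (membArc_vq_iff Cl).mp harc with h | ⟨j', h⟩ <;> simp [vt] at h
      · exact not_adj_var_extra Cl ((membArc_other_iff Cl (by simp [vq])).mp harc)
      · obtain ⟨rfl, hne⟩ := (adj_varvar Cl).mp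
          ((membArc_other_iff Cl (by simp [vq])).mp harc)
        exact hne rfl
    · rintro (⟨x, b⟩ | (j | t)) - hu
      · have hb : b ≠ σ x := by
          rintro rfl
          exact hu (Set.mem_insert_iff.mpr (Or.inr ⟨x, rfl⟩))
        exact ⟨Sum.inl (x, σ x), Set.mem_insert_iff.mpr (Or.inr ⟨x, rfl⟩),
          (membArc_other_iff Cl (by simp [vq])).mpr ((adj_varvar Cl).mpr ⟨rfl, hb⟩)⟩
      · obtain ⟨m, hm⟩ := hsat j
        refine ⟨Sum.inl (Cl j m), Set.mem_insert_iff.mpr (Or.inr ⟨(Cl j m).1, ?_⟩), ?_⟩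
        · show Sum.inl ((Cl j m).1, σ (Cl j m).1) = _
          rw [hm]
        · exact (membArc_other_iff Cl (by simp [vq])).mpr
            (((adj_varclause Cl).mpr ⟨m, rfl⟩).symm)
      · cases t with
        | true =>
          exact ⟨vq, Set.mem_insert _ _,
            (membArc_other_iff Cl (by simp [vt, vq])).mpr ((adj_vt Cl).mpr (Or.inr rfl))⟩
        | false => exact absurd (Set.mem_insert _ _) hu
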